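/- arXiv:2310.13427 — 8 statements merged into one kernel-verified Lean document; each statement's English description precedes it below -/
import Mathlib

section
/- In an abelian ℓ-group, the ideal generated by a subset T equals the intersection of all prime ideals containing T. -/
variable {G : Type*}

/-- An ideal of an abelian ℓ-group: a subgroup closed under domination by absolute value. -/
def IsLIdeal [Lattice G] [AddCommGroup G] (J : Set G) : Prop :=
  (0 : G) ∈ J ∧ (∀ x ∈ J, ∀ y ∈ J, x + y ∈ J) ∧ (∀ x ∈ J, -x ∈ J) ∧
    ∀ x ∈ J, ∀ y : G, |y| ≤ |x| → y ∈ J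

/-- A prime ideal of an abelian ℓ-group: a proper ideal `P` with
`a ⊓ b ∈ P → a ∈ P ∨ b ∈ P`. -/
def IsPrimeLIdeal [Lattice G] [AddCommGroup G] (P : Set G) : Prop :=
  IsLIdeal P ∧ P ≠ Set.univ ∧ ∀ a b : G, a ⊓ b ∈ P → a ∈ P ∨ b ∈ P

section Aux

variable [Lattice G] [AddCommGroup G] [CovariantClass G G (· + ·) (· ≤ ·)]

private lemma disj_add {a b c : G} (hab : a ⊓ b = 0) (hac : a ⊓ c = 0) :
    a ⊓ (b + c) = 0 := by
  have hb : (0 : G) ≤ b := hab ▸ inf_le_right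
  have hc : (0 : G) ≤ c := hac ▸ inf_le_right
  have ha : (0 : G) ≤ a := hab ▸ inf_le_left
  refine le_antisymm ?_ (by simpa using inf_le_inf ha (add_nonneg hb hc))
  have h1 : a ⊓ (b + c) ≤ (a + c) ⊓ (b + c) :=
    inf_le_inf_right _ (le_add_of_nonneg_right hc)
  have h2 : (a + c) ⊓ (b + c) = c := by rw [← inf_add, hab, zero_add]
  calc a ⊓ (b + c) ≤ a ⊓ ((a + c) ⊓ (b + c)) := le_inf inf_le_left h1
    _ = a ⊓ c := by rw [h2]
    _ = 0 := hac

private lemma disj_nsmul {a b : G} (hab : a ⊓ b = 0) (n : ℕ) : a ⊓ (n • b) = 0 := by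
  have ha : (0 : G) ≤ a := hab ▸ inf_le_left
  induction n with
  | zero => simpa using inf_eq_right.mpr ha
  | succ n ih => rw [succ_nsmul]; exact disj_add ih hab

private lemma disj_nsmul_nsmul {a b : G} (hab : a ⊓ b = 0) (n : ℕ) :
    (n • a) ⊓ (n • b) = 0 := by
  have h1 : a ⊓ (n • b) = 0 := disj_nsmul hab n
  have h2 : (n • b) ⊓ a = 0 := by rw [inf_comm]; exact h1
  have h3 : (n • b) ⊓ (n • a) = 0 := disj_nsmul h2 n
  rw [inf_comm]; exact h3

end Aux

/-- In an abelian ℓ-group, the ideal generated by a subset `T` (the intersection of all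
ideals containing `T`) equals the intersection of all prime ideals containing `T`. -/
theorem stmt3 [Lattice G] [AddCommGroup G] [CovariantClass G G (· + ·) (· ≤ ·)]
    (T : Set G) :
    ⋂₀ {J : Set G | IsLIdeal J ∧ T ⊆ J} = ⋂₀ {P : Set G | IsPrimeLIdeal P ∧ T ⊆ P} := by
  apply subset_antisymm
  · intro x hx P hP
    exact hx P ⟨hP.1.1, hP.2⟩
  · intro g hg
    by_contra hgJ
    set J0 : Set G := ⋂₀ {J : Set G | IsLIdeal J ∧ T ⊆ J} with hJ0def
    have hJ0ideal : IsLIdeal J0 := by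
      refine ⟨fun J hJ => hJ.1.1, ?_, ?_, ?_⟩
      · intro x hx y hy J hJ
        exact hJ.1.2.1 x (hx J hJ) y (hy J hJ)
      · intro x hx J hJ
        exact hJ.1.2.2.1 x (hx J hJ)
      · intro x hx y hy J hJ
        exact hJ.1.2.2.2 x (hx J hJ) y hy
    have hTJ0 : T ⊆ J0 := fun t ht J hJ => hJ.2 ht
    -- Zorn's lemma: maximal ideal above J0 avoiding g
    set S : Set (Set G) := {J : Set G | IsLIdeal J ∧ J0 ⊆ J ∧ g ∉ J} with hSdef
    have hchain : ∀ c ⊆ S, IsChain (· ⊆ ·) c → c.Nonempty →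
        ∃ ub ∈ S, ∀ s ∈ c, s ⊆ ub := by
      intro c hcS hc ⟨t0, ht0⟩
      refine ⟨⋃₀ c, ⟨⟨⟨t0, ht0, (hcS ht0).1.1⟩, ?_, ?_, ?_⟩, ?_, ?_⟩,
        fun s hs => Set.subset_sUnion_of_mem hs⟩
      · rintro x ⟨t1, ht1, hx⟩ y ⟨t2, ht2, hy⟩
        rcases hc.total ht1 ht2 with h | h
        · exact ⟨t2, ht2, (hcS ht2).1.2.1 x (h hx) y hy⟩
        · exact ⟨t1, ht1, (hcS ht1).1.2.1 x hx y (h hy)⟩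
      · rintro x ⟨t1, ht1, hx⟩
        exact ⟨t1, ht1, (hcS ht1).1.2.2.1 x hx⟩
      · rintro x ⟨t1, ht1, hx⟩ y hy
        exact ⟨t1, ht1, (hcS ht1).1.2.2.2 x hx y hy⟩
      · exact fun x hx => ⟨t0, ht0, (hcS ht0).2.1 hx⟩
      · rintro ⟨t1, ht1, hgx⟩
        exact (hcS ht1).2.2 hgx
    obtain ⟨M, hJ0M, hMS, hMmax⟩ :=
      zorn_subset_nonempty S hchain J0 ⟨hJ0ideal, subset_rfl, hgJ⟩
    obtain ⟨hMideal, hJ0subM, hgM⟩ := hMS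
    -- key: if c ≥ 0 and c ∉ M, then |g| ≤ m + n • c for some m ∈ M, m ≥ 0
    have key : ∀ c : G, 0 ≤ c → c ∉ M →
        ∃ m ∈ M, 0 ≤ m ∧ ∃ n : ℕ, |g| ≤ m + n • c := by
      intro c hc hcM
      set N : Set G := {y : G | ∃ m ∈ M, 0 ≤ m ∧ ∃ n : ℕ, |y| ≤ m + n • c} with hNdef
      have hNideal : IsLIdeal N := by
        refine ⟨⟨0, hMideal.1, le_refl 0, 0, by simp⟩, ?_, ?_, ?_⟩
        · rintro x ⟨m1, hm1, hm1n, n1, h1⟩ y ⟨m2, hm2, hm2n, n2, h2⟩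
          refine ⟨m1 + m2, hMideal.2.1 m1 hm1 m2 hm2, add_nonneg hm1n hm2n, n1 + n2, ?_⟩
          calc |x + y| ≤ |x| + |y| := abs_add_le x y
            _ ≤ (m1 + n1 • c) + (m2 + n2 • c) := add_le_add h1 h2
            _ = m1 + m2 + (n1 + n2) • c := by rw [add_nsmul]; abel
        · rintro x ⟨m1, hm1, hm1n, n1, h1⟩
          exact ⟨m1, hm1, hm1n, n1, by rwa [abs_neg]⟩
        · rintro x ⟨m1, hm1, hm1n, n1, h1⟩ y hyx
          exact ⟨m1, hm1, hm1n, n1, le_trans hyx h1⟩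
      have hMN : M ⊆ N := by
        intro x hx
        have habs : |x| ∈ M := hMideal.2.2.2 x hx |x| (by rw [abs_abs])
        exact ⟨|x|, habs, abs_nonneg x, 0, by simp⟩
      have hcN : c ∈ N := ⟨0, hMideal.1, le_refl 0, 1, by simp [abs_of_nonneg hc]⟩
      by_contra hne
      push_neg at hne
      have hgN : g ∉ N := by
        rintro ⟨m, hm, hmn, n, h⟩
        exact absurd h (hne m hm hmn n)
      have hNS : N ∈ S := ⟨hNideal, hJ0subM.trans hMN, hgN⟩
      have : N = M := subset_antisymm (hMmax hNS hMN) hMN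
      exact hcM (this ▸ hcN)
    -- M is prime
    have hprime : ∀ a b : G, a ⊓ b ∈ M → a ∈ M ∨ b ∈ M := by
      intro a b hab
      by_contra hor
      push_neg at hor
      obtain ⟨haM, hbM⟩ := hor
      set d := a ⊓ b with hd
      set a' := a - d with ha'
      set b' := b - d with hb'
      have ha'0 : 0 ≤ a' := sub_nonneg.2 inf_le_left
      have hb'0 : 0 ≤ b' := sub_nonneg.2 inf_le_right
      have hdisj : a' ⊓ b' = 0 := by
        rw [ha', hb', sub_eq_add_neg, sub_eq_add_neg, ← inf_add, hd]
        exact add_neg_cancel _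
      have ha'M : a' ∉ M := by
        intro h
        exact haM (by simpa [ha'] using hMideal.2.1 a' h d hab)
      have hb'M : b' ∉ M := by
        intro h
        exact hbM (by simpa [hb'] using hMideal.2.1 b' h d hab)
      obtain ⟨m1, hm1, hm1n, n1, h1⟩ := key a' ha'0 ha'M
      obtain ⟨m2, hm2, hm2n, n2, h2⟩ := key b' hb'0 hb'M
      set n := max n1 n2 with hn
      have h1' : |g| ≤ m1 + n • a' :=
        h1.trans (add_le_add_right (nsmul_le_nsmul_left ha'0 (le_max_left _ _)) _)
      have h2' : |g| ≤ m2 + n • b' :=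
        h2.trans (add_le_add_right (nsmul_le_nsmul_left hb'0 (le_max_right _ _)) _)
      have hle : |g| ≤ m1 + m2 := by
        calc |g| ≤ (m1 + n • a') ⊓ (m2 + n • b') := le_inf h1' h2'
          _ ≤ (m1 + m2 + n • a') ⊓ (m1 + m2 + n • b') := by
              refine inf_le_inf ?_ ?_
              · rw [add_right_comm]
                exact le_add_of_nonneg_right hm2n
              · rw [add_assoc]
                exact le_add_of_nonneg_left hm1n
          _ = m1 + m2 + (n • a' ⊓ n • b') := by rw [add_inf]
          _ = m1 + m2 := by rw [disj_nsmul_nsmul hdisj, add_zero]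
      have hgle : |g| ≤ |m1 + m2| := by
        rwa [abs_of_nonneg (add_nonneg hm1n hm2n)]
      exact hgM (hMideal.2.2.2 (m1 + m2) (hMideal.2.1 m1 hm1 m2 hm2) g hgle)
    have hMne : M ≠ Set.univ := fun h => hgM (h ▸ Set.mem_univ g)
    exact hgM (hg M ⟨⟨hMideal, hMne, hprime⟩, hTJ0.trans hJ0subM⟩)
end

section
/- Let U be a linearly ordered abelian ℓ-group, κ a cardinal, and for T a set of elements of the free abelian ℓ-group F_κ define V(T) = {x ∈ U^κ : t(x) = 0 for all t ∈ T} (interpreting terms as functions). Then for any two ideals J₁, J₂ of F_κ, V(J₁ ∩ J₂) = V(J₁) ∪ V(J₂). -/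
/-- Here `F` plays the role of the free abelian ℓ-group `F_κ` on `κ` generators, and
`ev x t` is the evaluation of the term (element) `t` of `F_κ` at the point `x : κ → U`
(so `ev x` is an ℓ-group homomorphism `F_κ → U`).  `V T = {x | ∀ t ∈ T, ev x t = 0}`.
For any two ideals `J₁, J₂` of `F_κ`, `V (J₁ ∩ J₂) = V J₁ ∪ V J₂`. -/
theorem stmt4 {κ U F : Type*} [AddCommGroup U] [LinearOrder U] [IsOrderedAddMonoid U]
    [Lattice F] [AddCommGroup F] [CovariantClass F F (· + ·) (· ≤ ·)]
    (ev : (κ → U) → F → U)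
    (hev_add : ∀ x (a b : F), ev x (a + b) = ev x a + ev x b)
    (hev_neg : ∀ x (a : F), ev x (-a) = -(ev x a))
    (hev_inf : ∀ x (a b : F), ev x (a ⊓ b) = ev x a ⊓ ev x b)
    (hev_sup : ∀ x (a b : F), ev x (a ⊔ b) = ev x a ⊔ ev x b)
    (J₁ J₂ : AddSubgroup F)
    (hs₁ : ∀ x ∈ J₁, ∀ y : F, |y| ≤ |x| → y ∈ J₁)
    (hs₂ : ∀ x ∈ J₂, ∀ y : F, |y| ≤ |x| → y ∈ J₂) :
    {x : κ → U | ∀ t : F, t ∈ J₁ → t ∈ J₂ → ev x t = 0} =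
      {x : κ → U | ∀ t ∈ J₁, ev x t = 0} ∪ {x : κ → U | ∀ t ∈ J₂, ev x t = 0} := by
  ext x
  simp only [Set.mem_setOf_eq, Set.mem_union]
  constructor
  · intro h
    by_contra hc
    push_neg at hc
    obtain ⟨⟨t₁, ht₁, h1⟩, ⟨t₂, ht₂, h2⟩⟩ := hc
    have habs : ∀ a : F, ev x |a| = |ev x a| := by
      intro a
      rw [abs, abs, hev_sup, hev_neg]
    set t : F := |t₁| ⊓ |t₂| with ht
    have htnn : (0:F) ≤ t := le_inf (abs_nonneg t₁) (abs_nonneg t₂)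
    have htabs : |t| = t := abs_of_nonneg htnn
    have hmem₁ : t ∈ J₁ := hs₁ t₁ ht₁ t (by rw [htabs]; exact inf_le_left)
    have hmem₂ : t ∈ J₂ := hs₂ t₂ ht₂ t (by rw [htabs]; exact inf_le_right)
    have h0 : ev x t = 0 := h t hmem₁ hmem₂
    rw [ht, hev_inf, habs, habs] at h0
    rcases le_total |ev x t₁| |ev x t₂| with hle | hle
    · rw [inf_eq_left.mpr hle] at h0
      exact h1 (abs_eq_zero.mp h0)
    · rw [inf_eq_right.mpr hle] at h0
      exact h2 (abs_eq_zero.mp h0)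
  · rintro (h | h) t ht₁ ht₂
    exacts [h t ht₁, h t ht₂]
end

section
/- Let U be a proper ordered field extension of ℝ in which every limited element has a standard part, and let x ∈ U^n be written as x = α₁v₁ + ⋯ + α_kv_k where α₁,…,α_k ∈ U are strictly positive with α_{i+1}/α_i infinitesimal for each i < k, and v₁,…,v_k ∈ ℝ^n are orthonormal. Then: (1) k ≤ n; (2) α_j/α_i is infinitesimal whenever i < j; (3) x is limited (all coordinates limited) if and only if α₁ is limited, and in that case st(x) = st(α₁)·v₁; (4) x is infinitesimal if and only if α₁ is infinitesimal. -/
/-- `x` is infinitesimal in the ordered field extension `K` of `ℝ` (via `f`). -/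
def Infml {K : Type*} [Field K] [LinearOrder K] [IsStrictOrderedRing K] (f : ℝ →+* K) (x : K) : Prop :=
  ∀ r : ℝ, 0 < r → |x| < f r

/-- `x` is limited in the ordered field extension `K` of `ℝ` (via `f`). -/
def Ltd {K : Type*} [Field K] [LinearOrder K] [IsStrictOrderedRing K] (f : ℝ →+* K) (x : K) : Prop :=
  ∃ r : ℝ, |x| < f r

section Helpers

variable {K : Type*} [Field K] [LinearOrder K] [IsStrictOrderedRing K] {f : ℝ →+* K}

lemma map_abs' (hf : StrictMono f) (r : ℝ) : |f r| = f |r| := by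
  rcases abs_cases r with ⟨h1, h2⟩ | ⟨h1, h2⟩
  · rw [h1, abs_of_nonneg]
    simpa using hf.monotone h2
  · rw [h1, map_neg, abs_of_nonpos (show f r ≤ 0 by simpa using hf.monotone h2.le)]

lemma infml_ltd {x : K} (h : Infml f x) : Ltd f x := ⟨1, h 1 one_pos⟩

lemma ltd_map (hf : StrictMono f) (r : ℝ) : Ltd f (f r) :=
  ⟨|r| + 1, by rw [map_abs' hf]; exact hf (lt_add_one _)⟩

lemma infml_zero (hf : StrictMono f) : Infml f 0 := fun r hr => by
  rw [abs_zero]; simpa using hf hr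

lemma ltd_zero (hf : StrictMono f) : Ltd f 0 := infml_ltd (infml_zero hf)

lemma infml_neg {x : K} (h : Infml f x) : Infml f (-x) := fun r hr => by
  rw [abs_neg]; exact h r hr

lemma infml_add (hf : StrictMono f) {x y : K} (hx : Infml f x) (hy : Infml f y) : Infml f (x + y) := by
  intro r hr
  have h1 := hx (r / 2) (by linarith)
  have h2 := hy (r / 2) (by linarith)
  calc |x + y| ≤ |x| + |y| := abs_add_le x y
    _ < f (r / 2) + f (r / 2) := by gcongr
    _ = f r := by rw [← map_add]; norm_num

lemma ltd_add (hf : StrictMono f) {x y : K} (hx : Ltd f x) (hy : Ltd f y) : Ltd f (x + y) := by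
  obtain ⟨r, hr⟩ := hx
  obtain ⟨s, hs⟩ := hy
  exact ⟨r + s, by
    calc |x + y| ≤ |x| + |y| := abs_add_le x y
      _ < f r + f s := by gcongr
      _ = f (r + s) := (map_add f r s).symm⟩

lemma ltd_mul (hf : StrictMono f) {x y : K} (hx : Ltd f x) (hy : Ltd f y) : Ltd f (x * y) := by
  obtain ⟨r, hr⟩ := hx
  obtain ⟨s, hs⟩ := hy
  refine ⟨(|r| + 1) * (|s| + 1), ?_⟩
  have hr' : |x| < f (|r| + 1) := lt_of_lt_of_le hr (hf.monotone (by
    have := le_abs_self r; linarith))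
  have hs' : |y| < f (|s| + 1) := lt_of_lt_of_le hs (hf.monotone (by
    have := le_abs_self s; linarith))
  rw [abs_mul, map_mul]
  exact mul_lt_mul'' hr' hs' (abs_nonneg x) (abs_nonneg y)

lemma infml_mul_ltd (hf : StrictMono f) {x y : K} (hx : Infml f x) (hy : Ltd f y) : Infml f (x * y) := by
  obtain ⟨s, hs⟩ := hy
  have hs1 : (0:ℝ) < |s| + 1 := by positivity
  have hs' : |y| < f (|s| + 1) := lt_of_lt_of_le hs (hf.monotone (by
    have := le_abs_self s; linarith))
  intro r hr
  have h1 := hx (r / (|s| + 1)) (by positivity)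
  calc |x * y| = |x| * |y| := abs_mul x y
    _ < f (r / (|s| + 1)) * f (|s| + 1) :=
      mul_lt_mul'' h1 hs' (abs_nonneg x) (abs_nonneg y)
    _ = f r := by rw [← map_mul, div_mul_cancel₀ _ (ne_of_gt hs1)]

lemma infml_sum (hf : StrictMono f) {ι : Type*} (s : Finset ι) (g : ι → K)
    (h : ∀ i ∈ s, Infml f (g i)) : Infml f (∑ i ∈ s, g i) :=
  Finset.sum_induction g (Infml f) (fun _ _ => infml_add hf) (infml_zero hf) h

lemma ltd_sum (hf : StrictMono f) {ι : Type*} (s : Finset ι) (g : ι → K)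
    (h : ∀ i ∈ s, Ltd f (g i)) : Ltd f (∑ i ∈ s, g i) :=
  Finset.sum_induction g (Ltd f) (fun _ _ => ltd_add hf) (ltd_zero hf) h

lemma infml_map_eq_zero (hf : StrictMono f) {r : ℝ} (h : Infml f (f r)) : r = 0 := by
  by_contra hr
  have := h |r| (abs_pos.2 hr)
  rw [map_abs' hf] at this
  exact lt_irrefl _ this

lemma st_unique (hf : StrictMono f) (st : K → ℝ) (hst : ∀ x : K, Ltd f x → Infml f (x - f (st x)))
    {x : K} {s : ℝ} (hx : Ltd f x) (h : Infml f (x - f s)) : st x = s := by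
  have h1 : Infml f (f (st x - s)) := by
    have heq : f (st x - s) = (x - f s) + -(x - f (st x)) := by
      rw [map_sub]; ring
    rw [heq]
    exact infml_add hf h (infml_neg (hst x hx))
  have := infml_map_eq_zero hf h1
  linarith

end Helpers

/-- Properties of the orthogonal decomposition `x = α₁v₁ + ⋯ + α_kv_k` of a point of
`U^n`, where `U = K` is a proper ordered field extension of `ℝ` in which every limited
element has a standard part `st`: (1) `k ≤ n`; (2) `α_j/α_i` is infinitesimal for
`i < j`; (3) `x` is limited iff `α₁` is, in which case `st x = st α₁ • v₁`;
(4) `x` is infinitesimal iff `α₁` is. -/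
theorem stmt10 {K : Type*} [Field K] [LinearOrder K] [IsStrictOrderedRing K] (f : ℝ →+* K) (hf : StrictMono f)
    (hproper : ∃ x : K, ∀ r : ℝ, f r ≠ x)
    (st : K → ℝ)
    (hst : ∀ x : K, Ltd f x → Infml f (x - f (st x)))
    (n k : ℕ) (hk : 0 < k)
    (v : Fin k → Fin n → ℝ)
    (horth : ∀ i j : Fin k, (∑ c : Fin n, v i c * v j c) = if i = j then 1 else 0)
    (a : Fin k → K) (hapos : ∀ i, 0 < a i)
    (hratio : ∀ (i : ℕ) (h : i + 1 < k),
      Infml f (a ⟨i + 1, h⟩ / a ⟨i, Nat.lt_of_succ_lt h⟩))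
    (x : Fin n → K) (hx : ∀ c, x c = ∑ i : Fin k, a i * f (v i c)) :
    k ≤ n ∧
    (∀ i j : Fin k, i < j → Infml f (a j / a i)) ∧
    ((∀ c, Ltd f (x c)) ↔ Ltd f (a ⟨0, hk⟩)) ∧
    (Ltd f (a ⟨0, hk⟩) → ∀ c, st (x c) = st (a ⟨0, hk⟩) * v ⟨0, hk⟩ c) ∧
    ((∀ c, Infml f (x c)) ↔ Infml f (a ⟨0, hk⟩)) := by
  -- Part 1: k ≤ n
  have part1 : k ≤ n := by
    have hli : LinearIndependent ℝ v := by
      rw [Fintype.linearIndependent_iff]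
      intro g hg j
      have hkey : ∑ c : Fin n, (∑ i : Fin k, g i • v i) c * v j c = g j := by
        simp only [Finset.sum_apply, Pi.smul_apply, smul_eq_mul, Finset.sum_mul]
        rw [Finset.sum_comm]
        have h1 : ∀ i : Fin k, ∑ c : Fin n, g i * v i c * v j c
            = g i * ∑ c : Fin n, v i c * v j c := by
          intro i; rw [Finset.mul_sum]; exact Finset.sum_congr rfl fun c _ => by ring
        simp only [h1, horth]
        simp
      rw [hg] at hkey
      simpa using hkey.symm
    have := hli.fintype_card_le_finrank
    simpa [Module.finrank_fin_fun] using this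
  -- Part 2
  have part2 : ∀ i j : Fin k, i < j → Infml f (a j / a i) := by
    have step : ∀ (i : Fin k) (m : ℕ) (h : (i : ℕ) + m + 1 < k),
        Infml f (a ⟨(i : ℕ) + m + 1, h⟩ / a i) := by
      intro i m
      induction m with
      | zero =>
        intro h
        have := hratio i h
        simpa using this
      | succ m ih =>
        intro h
        have hj' : (i : ℕ) + m + 1 < k := by omega
        have h1 := ih hj'
        have h2 : Infml f (a ⟨(i : ℕ) + m + 1 + 1, by omega⟩ / a ⟨(i : ℕ) + m + 1, hj'⟩) :=
          hratio ((i : ℕ) + m + 1) (by omega)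
        have h3 := infml_mul_ltd hf h2 (infml_ltd h1)
        have heq : a ⟨(i : ℕ) + m + 1 + 1, by omega⟩ / a ⟨(i : ℕ) + m + 1, hj'⟩
            * (a ⟨(i : ℕ) + m + 1, hj'⟩ / a i) = a ⟨(i : ℕ) + (m + 1) + 1, h⟩ / a i := by
          have hne : a (⟨(i : ℕ) + m + 1, hj'⟩ : Fin k) ≠ 0 := ne_of_gt (hapos _)
          have hne2 : a i ≠ 0 := ne_of_gt (hapos _)
          have : (⟨(i : ℕ) + (m + 1) + 1, h⟩ : Fin k) = ⟨(i : ℕ) + m + 1 + 1, by omega⟩ :=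
            Fin.ext (by simp only [Fin.val_mk]; omega)
          rw [this]
          field_simp
        rw [heq] at h3
        exact h3
    intro i j hij
    have hij' : (j : ℕ) = (i : ℕ) + ((j : ℕ) - (i : ℕ) - 1) + 1 := by
      have := Fin.lt_def.mp hij; omega
    have hjeq : j = ⟨(i : ℕ) + ((j : ℕ) - (i : ℕ) - 1) + 1, by rw [← hij']; exact j.isLt⟩ :=
      Fin.ext (by simp only [Fin.val_mk]; omega)
    rw [hjeq]
    exact step i _ _
  -- key identity: a j = ∑ c, x c * f (v j c)
  have key : ∀ j : Fin k, a j = ∑ c : Fin n, x c * f (v j c) := by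
    intro j
    have : ∑ c : Fin n, x c * f (v j c)
        = ∑ i : Fin k, a i * f (∑ c : Fin n, v i c * v j c) := by
      simp only [hx, Finset.sum_mul]
      rw [Finset.sum_comm]
      refine Finset.sum_congr rfl fun i _ => ?_
      rw [map_sum, Finset.mul_sum]
      exact Finset.sum_congr rfl fun c _ => by rw [map_mul]; ring
    rw [this]
    simp only [horth]
    rw [Finset.sum_eq_single j]
    · simp
    · intro b _ hb; simp [hb]
    · intro h; exact absurd (Finset.mem_univ j) h
  set i0 : Fin k := ⟨0, hk⟩ with hi0
  -- ratios with a i0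
  have hrat0 : ∀ i : Fin k, i ≠ i0 → Infml f (a i / a i0) := by
    intro i hi
    refine part2 i0 i ?_
    rw [Fin.lt_def]
    have : (i : ℕ) ≠ 0 := fun h0 => hi (Fin.ext h0)
    exact Nat.pos_of_ne_zero this
  have ha0ne : a i0 ≠ 0 := ne_of_gt (hapos _)
  -- limitedness transfer
  have hLtd_all : Ltd f (a i0) → ∀ i : Fin k, Ltd f (a i) := by
    intro h0 i
    by_cases hi : i = i0
    · rw [hi]; exact h0
    · have h2 := infml_mul_ltd hf (hrat0 i hi) h0
      rw [div_mul_cancel₀ _ ha0ne] at h2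
      exact infml_ltd h2
  have hInfml_all : Infml f (a i0) → ∀ i : Fin k, Infml f (a i) := by
    intro h0 i
    by_cases hi : i = i0
    · rw [hi]; exact h0
    · have := infml_mul_ltd hf (hrat0 i hi) (infml_ltd h0)
      rwa [div_mul_cancel₀ _ ha0ne] at this
  -- part 3 iff
  have part3 : (∀ c, Ltd f (x c)) ↔ Ltd f (a i0) := by
    constructor
    · intro h
      rw [key i0]
      exact ltd_sum hf _ _ fun c _ => ltd_mul hf (h c) (ltd_map hf _)
    · intro h c
      rw [hx c]
      exact ltd_sum hf _ _ fun i _ => ltd_mul hf (hLtd_all h i) (ltd_map hf _)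
  -- part 5 iff
  have part5 : (∀ c, Infml f (x c)) ↔ Infml f (a i0) := by
    constructor
    · intro h
      rw [key i0]
      exact infml_sum hf _ _ fun c _ => infml_mul_ltd hf (h c) (ltd_map hf _)
    · intro h c
      rw [hx c]
      exact infml_sum hf _ _ fun i _ => infml_mul_ltd hf (hInfml_all h i) (ltd_map hf _)
  -- part 4 : standard part
  have part4 : Ltd f (a i0) → ∀ c, st (x c) = st (a i0) * v i0 c := by
    intro h0 c
    have hxc : Ltd f (x c) := part3.mpr h0 c
    refine st_unique hf st hst hxc ?_
    have heq : x c - f (st (a i0) * v i0 c)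
        = (a i0 - f (st (a i0))) * f (v i0 c)
          + ∑ i ∈ Finset.univ.erase i0, a i * f (v i c) := by
      rw [hx c, map_mul, ← Finset.add_sum_erase Finset.univ _ (Finset.mem_univ i0)]
      ring
    rw [heq]
    refine infml_add hf (infml_mul_ltd hf (hst _ h0) (ltd_map hf _)) ?_
    refine infml_sum hf _ _ fun i hi => ?_
    have hine : i ≠ i0 := (Finset.mem_erase.mp hi).1
    have : Infml f (a i) := by
      have := infml_mul_ltd hf (hrat0 i hine) h0
      rwa [div_mul_cancel₀ _ ha0ne] at this
    exact infml_mul_ltd hf this (ltd_map hf _)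
  exact ⟨part1, part2, part3, part4, part5⟩
end

section
/- Let U be an ordered field extension of ℝ, let x ∈ U^n have orthogonal decomposition x = α₁v₁ + ⋯ + α_kv_k (α_i > 0 in U with α_{i+1}/α_i infinitesimal, v_i ∈ ℝ^n orthonormal), and let f : ℝ^n → ℝ be a linear map with U-linear extension *f : U^n → U. Then *f(x) = 0 if and only if f(v_i) = 0 for all i = 1,…,k; *f(x) > 0 if and only if there exists i with f(v_j) = 0 for all j < i and f(v_i) > 0; and *f(x) < 0 if and only if there exists i with f(v_j) = 0 for all j < i and f(v_i) < 0. -/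
section Aux

variable {K : Type*} [Field K] [LinearOrder K] [IsStrictOrderedRing K]

lemma aux_map_abs (f : ℝ →+* K) (hf : StrictMono f) (c : ℝ) : |f c| = f |c| := by
  rcases le_or_gt 0 c with h | h
  · rw [abs_of_nonneg h, abs_of_nonneg]
    rw [← map_zero f]; exact hf.monotone h
  · rw [abs_of_neg h, abs_of_neg, ← map_neg]
    calc f c < f 0 := hf h
    _ = 0 := map_zero f

lemma aux_infml_zero (f : ℝ →+* K) (hf : StrictMono f) : Infml f (0 : K) := by
  intro r hr
  rw [abs_zero, ← map_zero f]; exact hf hr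

lemma aux_infml_add (f : ℝ →+* K) {x y : K} (hx : Infml f x) (hy : Infml f y) : Infml f (x + y) := by
  intro r hr
  have h2 : (0:ℝ) < r / 2 := by positivity
  calc |x + y| ≤ |x| + |y| := abs_add_le x y
  _ < f (r/2) + f (r/2) := add_lt_add (hx _ h2) (hy _ h2)
  _ = f r := by rw [← map_add]; norm_num

lemma aux_infml_mul_ltd (f : ℝ →+* K) (hf : StrictMono f) {x y : K} (hx : Infml f x) (hy : Ltd f y) : Infml f (x * y) := by
  obtain ⟨r, hr⟩ := hy
  have hr0 : (0:ℝ) < r := by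
    have h0 : f 0 ≤ |y| := by rw [map_zero]; exact abs_nonneg y
    exact hf.lt_iff_lt.mp (lt_of_le_of_lt h0 hr)
  intro s hs
  rw [abs_mul]
  calc |x| * |y| < f (s/r) * f r :=
        mul_lt_mul'' (hx _ (by positivity)) hr (abs_nonneg _) (abs_nonneg _)
  _ = f s := by rw [← map_mul]; congr 1; field_simp

lemma aux_infml_ltd (f : ℝ →+* K) {x : K} (hx : Infml f x) : Ltd f x := ⟨1, hx 1 one_pos⟩

lemma aux_ltd_const (f : ℝ →+* K) (hf : StrictMono f) (c : ℝ) : Ltd f (f c) :=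
  ⟨|c| + 1, by rw [aux_map_abs f hf]; exact hf (lt_add_one _)⟩

lemma aux_infml_sum (f : ℝ →+* K) (hf : StrictMono f) {ι : Type*} (s : Finset ι) (g : ι → K)
    (h : ∀ i ∈ s, Infml f (g i)) : Infml f (∑ i ∈ s, g i) := by
  induction s using Finset.cons_induction with
  | empty => simpa using aux_infml_zero f hf
  | cons i s hi ih =>
    rw [Finset.sum_cons]
    exact aux_infml_add f (h i (by simp)) (ih fun j hj => h j (by simp [hj]))

lemma aux_key (f : ℝ →+* K) (hf : StrictMono f) {k : ℕ} (a : Fin k → K) (hapos : ∀ i, 0 < a i)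
    (hratio : ∀ (i : ℕ) (h : i + 1 < k),
      Infml f (a ⟨i + 1, h⟩ / a ⟨i, Nat.lt_of_succ_lt h⟩))
    (b : Fin k → ℝ) :
    ((∑ i : Fin k, a i * f (b i)) = 0 ↔ ∀ i : Fin k, b i = 0) ∧
    (0 < (∑ i : Fin k, a i * f (b i)) ↔
      ∃ i : Fin k, (∀ j : Fin k, j < i → b j = 0) ∧ 0 < b i) ∧
    ((∑ i : Fin k, a i * f (b i)) < 0 ↔
      ∃ i : Fin k, (∀ j : Fin k, j < i → b j = 0) ∧ b i < 0) := by
  set S : K := ∑ i : Fin k, a i * f (b i) with hS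
  -- ratios are infinitesimal
  have hrat : ∀ (jn : ℕ) (hj : jn < k) (i : Fin k), (i : ℕ) < jn →
      Infml f (a ⟨jn, hj⟩ / a i) := by
    intro jn
    induction jn with
    | zero => intro hj i hi; omega
    | succ m ih =>
      intro hj i hi
      have hm : m < k := Nat.lt_of_succ_lt hj
      rcases Nat.lt_or_ge (i : ℕ) m with h | h
      · have h1 := ih hm i h
        have h2 := hratio m hj
        have hne1 : a ⟨m, hm⟩ ≠ 0 := (hapos _).ne'
        have hne2 : a i ≠ 0 := (hapos _).ne'
        have heq : a ⟨m+1, hj⟩ / a i = (a ⟨m+1, hj⟩ / a ⟨m, hm⟩) * (a ⟨m, hm⟩ / a i) := by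
          field_simp
        rw [heq]
        exact aux_infml_mul_ltd f hf h2 (aux_infml_ltd f h1)
      · have hie : i = ⟨m, hm⟩ := by apply Fin.ext; simp; omega
        rw [hie]
        exact hratio m hj
  have hrat' : ∀ i j : Fin k, i < j → Infml f (a j / a i) := by
    intro i j hij
    have := hrat (j : ℕ) j.isLt i hij
    simpa using this
  have h0 : (∀ i, b i = 0) → S = 0 := fun h =>
    Finset.sum_eq_zero fun i _ => by rw [h i, map_zero, mul_zero]
  have hkey : ∀ i₀ : Fin k, (∀ j, j < i₀ → b j = 0) →
      ∃ ε : K, S = a i₀ * (f (b i₀) + ε) ∧ Infml f ε := by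
    intro i₀ hz
    refine ⟨(∑ i ∈ Finset.univ.erase i₀, a i * f (b i)) / a i₀, ?_, ?_⟩
    · have ha := (hapos i₀).ne'
      rw [mul_add, mul_div_cancel₀ _ ha, hS,
        ← Finset.add_sum_erase _ _ (Finset.mem_univ i₀)]
    · rw [Finset.sum_div]
      apply aux_infml_sum f hf
      intro i hi
      rcases lt_trichotomy i i₀ with h | h | h
      · rw [hz i h, map_zero, mul_zero, zero_div]
        exact aux_infml_zero f hf
      · exact absurd h (Finset.ne_of_mem_erase hi)
      · have heq : a i * f (b i) / a i₀ = (a i / a i₀) * f (b i) := by ring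
        rw [heq]
        exact aux_infml_mul_ltd f hf (hrat' i₀ i h) (aux_ltd_const f hf _)
  have hS_pos : ∀ i₀ : Fin k, (∀ j, j < i₀ → b j = 0) → 0 < b i₀ → 0 < S := by
    intro i₀ hz hb
    obtain ⟨ε, hSe, hε⟩ := hkey i₀ hz
    have h1 : |ε| < f (b i₀) := hε _ hb
    have h2 : -f (b i₀) < ε := neg_lt_of_abs_lt h1
    have : 0 < f (b i₀) + ε := by linarith
    rw [hSe]; exact mul_pos (hapos i₀) this
  have hS_neg : ∀ i₀ : Fin k, (∀ j, j < i₀ → b j = 0) → b i₀ < 0 → S < 0 := by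
    intro i₀ hz hb
    obtain ⟨ε, hSe, hε⟩ := hkey i₀ hz
    have h1 : |ε| < f (-b i₀) := hε _ (by linarith)
    rw [map_neg] at h1
    have h2 : ε < -f (b i₀) := lt_of_le_of_lt (le_abs_self ε) h1
    have : f (b i₀) + ε < 0 := by linarith
    rw [hSe]
    exact mul_neg_of_pos_of_neg (hapos i₀) this
  have tri : (∀ i, b i = 0) ∨ (∃ i, (∀ j, j < i → b j = 0) ∧ 0 < b i) ∨
      (∃ i, (∀ j, j < i → b j = 0) ∧ b i < 0) := by
    by_cases h : ∀ i, b i = 0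
    · left; exact h
    · push_neg at h
      have hs : (Finset.univ.filter (fun i => b i ≠ 0)).Nonempty := by
        obtain ⟨i, hi⟩ := h; exact ⟨i, by simp [hi]⟩
      set i₀ := (Finset.univ.filter (fun i => b i ≠ 0)).min' hs with hi₀def
      have hi₀ : b i₀ ≠ 0 := by
        have := Finset.min'_mem _ hs
        simpa using this
      have hz : ∀ j, j < i₀ → b j = 0 := by
        intro j hj
        by_contra hb
        exact absurd (Finset.min'_le _ j (by simp [hb])) (not_le.mpr hj)
      rcases hi₀.lt_or_gt with h' | h'
      · right; right; exact ⟨i₀, hz, h'⟩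
      · right; left; exact ⟨i₀, hz, h'⟩
  refine ⟨⟨?_, h0⟩, ⟨?_, ?_⟩, ⟨?_, ?_⟩⟩
  · intro hSz
    rcases tri with h | ⟨i, hz, hb⟩ | ⟨i, hz, hb⟩
    · exact h
    · exact absurd hSz (hS_pos i hz hb).ne'
    · exact absurd hSz (hS_neg i hz hb).ne
  · intro hSp
    rcases tri with h | h | ⟨i, hz, hb⟩
    · exact absurd (h0 h) (by intro h'; rw [h'] at hSp; exact lt_irrefl 0 hSp)
    · exact h
    · exact absurd hSp (not_lt.mpr (hS_neg i hz hb).le)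
  · rintro ⟨i, hz, hb⟩; exact hS_pos i hz hb
  · intro hSn
    rcases tri with h | ⟨i, hz, hb⟩ | h
    · exact absurd (h0 h) (by intro h'; rw [h'] at hSn; exact lt_irrefl 0 hSn)
    · exact absurd hSn (not_lt.mpr (hS_pos i hz hb).le)
    · exact h
  · rintro ⟨i, hz, hb⟩; exact hS_neg i hz hb

end Aux

/-- Let `x = α₁v₁ + ⋯ + α_kv_k` be an orthogonal decomposition in `K^n`, where `K` is an
ordered field extension of `ℝ` in which every limited element has a standard part, and
let `ℓ : ℝ^n → ℝ` be linear with `K`-linear extension `F` (given on coordinates by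
`F y = ∑ c, y c * ℓ(e_c)`).  Then the sign of `F x` is determined by the values of `ℓ`
on the vectors of the index of `x`. -/
theorem stmt11 {K : Type*} [Field K] [LinearOrder K] [IsStrictOrderedRing K] (f : ℝ →+* K) (hf : StrictMono f)
    (st : K → ℝ)
    (hst : ∀ x : K, Ltd f x → Infml f (x - f (st x)))
    (n k : ℕ)
    (v : Fin k → Fin n → ℝ)
    (horth : ∀ i j : Fin k, (∑ c : Fin n, v i c * v j c) = if i = j then 1 else 0)
    (a : Fin k → K) (hapos : ∀ i, 0 < a i)
    (hratio : ∀ (i : ℕ) (h : i + 1 < k),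
      Infml f (a ⟨i + 1, h⟩ / a ⟨i, Nat.lt_of_succ_lt h⟩))
    (x : Fin n → K) (hx : ∀ c, x c = ∑ i : Fin k, a i * f (v i c))
    (l : (Fin n → ℝ) →ₗ[ℝ] ℝ)
    (F : (Fin n → K) → K)
    (hF : ∀ y : Fin n → K, F y = ∑ c : Fin n, y c * f (l (Pi.single c 1))) :
    (F x = 0 ↔ ∀ i : Fin k, l (v i) = 0) ∧
    (0 < F x ↔ ∃ i : Fin k, (∀ j : Fin k, j < i → l (v j) = 0) ∧ 0 < l (v i)) ∧
    (F x < 0 ↔ ∃ i : Fin k, (∀ j : Fin k, j < i → l (v j) = 0) ∧ l (v i) < 0) := by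
  have hl : ∀ i : Fin k, l (v i) = ∑ c : Fin n, v i c * l (Pi.single c 1) := by
    intro i
    have hv : v i = ∑ c : Fin n, v i c • (Pi.single c (1:ℝ) : Fin n → ℝ) := by
      funext d
      simp only [Finset.sum_apply, Pi.smul_apply, Pi.single_apply, smul_eq_mul,
        mul_ite, mul_one, mul_zero]
      simp [Finset.sum_ite_eq]
    conv_lhs => rw [hv]
    rw [map_sum]
    simp [smul_eq_mul]
  have hFx : F x = ∑ i : Fin k, a i * f (l (v i)) := by
    rw [hF]
    calc ∑ c : Fin n, x c * f (l (Pi.single c 1))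
        = ∑ c : Fin n, ∑ i : Fin k, a i * (f (v i c) * f (l (Pi.single c 1))) := by
          refine Finset.sum_congr rfl fun c _ => ?_
          rw [hx c, Finset.sum_mul]
          exact Finset.sum_congr rfl fun i _ => by ring
      _ = ∑ i : Fin k, ∑ c : Fin n, a i * (f (v i c) * f (l (Pi.single c 1))) :=
          Finset.sum_comm
      _ = ∑ i : Fin k, a i * f (l (v i)) := by
          refine Finset.sum_congr rfl fun i _ => ?_
          rw [← Finset.mul_sum, hl i, map_sum]
          simp [map_mul]
  rw [hFx]
  exact aux_key f hf a hapos hratio (fun i => l (v i))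
end

section
/- Let V be a rational subspace of ℝ^n and w ∈ V^⊥ a unit vector. Then there exists a linear map g : ℝ^n → ℝ with integer coefficients such that g(w) < 0 and g(v) = 0 for all v ∈ V. Moreover, if u, w ∈ V^⊥ are two distinct unit vectors, there is such a g with integer coefficients satisfying g(u) > 0, g(w) < 0, and g(v) = 0 for all v ∈ V. -/
open Submodule Module

set_option maxHeartbeats 1000000

noncomputable def eV (n : ℕ) : (Fin n → ℚ) →ₗ[ℚ] EuclideanSpace ℝ (Fin n) where
  toFun q := WithLp.toLp 2 (fun j => (q j : ℝ))
  map_add' q r := by ext j; show ((q j + r j : ℚ) : ℝ) = _; push_cast; rfl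
  map_smul' a q := by ext j; show ((a * q j : ℚ) : ℝ) = _; simp [Rat.smul_def]

lemma eV_apply (n : ℕ) (q : Fin n → ℚ) (j : Fin n) : eV n q j = (q j : ℝ) := rfl

noncomputable def dotQ (n : ℕ) (a : Fin n → ℚ) : (Fin n → ℚ) →ₗ[ℚ] ℚ where
  toFun q := ∑ j, a j * q j
  map_add' q r := by simp [mul_add, Finset.sum_add_distrib]
  map_smul' c q := by
    simp only [Finset.mul_sum, RingHom.id_apply, smul_eq_mul, Pi.smul_apply]
    exact Finset.sum_congr rfl fun i _ => by ring

lemma dotQ_comm (n : ℕ) (a b : Fin n → ℚ) : dotQ n a b = dotQ n b a := by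
  show (∑ j, a j * b j) = ∑ j, b j * a j
  exact Finset.sum_congr rfl fun i _ => mul_comm _ _

lemma transfer {n : ℕ} {ι : Type*} [Fintype ι] (v : ι → (Fin n → ℚ))
    (hv : LinearIndependent ℚ v) : LinearIndependent ℝ (fun i => eV n (v i)) := by
  rw [Fintype.linearIndependent_iff] at hv ⊢
  intro c hc i
  set B := Basis.ofVectorSpace ℚ ℝ with hB
  have key : ∀ b, (fun i => B.repr (c i) b) = 0 := by
    intro b
    funext i
    refine hv (fun i => B.repr (c i) b) ?_ i
    funext j
    have hcj : ∑ i, (v i j) • (c i) = 0 := by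
      have h1 := congrArg (EuclideanSpace.proj (𝕜 := ℝ) j) hc
      simp only [map_sum, map_smul, map_zero] at h1
      rw [← h1]
      apply Finset.sum_congr rfl
      intro i _
      show v i j • c i = c i • (eV n (v i) j)
      rw [Rat.smul_def, eV_apply, smul_eq_mul]; ring
    have := congrArg (fun x => B.repr x b) hcj
    simp only [map_sum, map_smul, Finsupp.smul_apply, smul_eq_mul, map_zero,
      Finsupp.coe_zero, Pi.zero_apply] at this
    simpa [mul_comm] using this
  have : B.repr (c i) = 0 := by
    ext b
    exact congrFun (key b) i
  simpa using B.repr.map_eq_zero_iff.mp this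

lemma keyspan (n : ℕ) (V : Submodule ℝ (EuclideanSpace ℝ (Fin n)))
    (hV : ∃ s : Set (EuclideanSpace ℝ (Fin n)),
      (∀ x ∈ s, ∀ j, ∃ q : ℚ, x j = (q : ℝ)) ∧ Submodule.span ℝ s = V) :
    ∃ (m : ℕ) (y : Fin m → (Fin n → ℚ)),
      (∀ k, eV n (y k) ∈ Vᗮ) ∧
      Submodule.span ℝ (Set.range (fun k => eV n (y k))) = Vᗮ := by
  classical
  obtain ⟨s, hs_rat, hs_span⟩ := hV
  -- finite spanning subset t ⊆ s
  obtain ⟨t, hts, htfin, ht_span⟩ :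
      ∃ t : Set (EuclideanSpace ℝ (Fin n)), t ⊆ s ∧ t.Finite ∧ span ℝ t = V := by
    obtain ⟨G, hG⟩ := (IsNoetherian.noetherian V : V.FG)
    choose T hT1 hT2 using fun g : G =>
      Submodule.mem_span_finite_of_mem_span (R := ℝ) (S := s)
        (x := (g : EuclideanSpace ℝ (Fin n)))
        (by rw [hs_span, ← hG]; exact subset_span g.2)
    refine ⟨⋃ g, ↑(T g), Set.iUnion_subset hT1, Set.finite_iUnion (fun g => (T g).finite_toSet),
      le_antisymm ?_ ?_⟩
    · exact le_trans (span_mono (Set.iUnion_subset hT1)) (le_of_eq hs_span)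
    · rw [← hG]
      refine span_le.2 ?_
      intro g hg
      have hsub : (T ⟨g, hg⟩ : Set (EuclideanSpace ℝ (Fin n))) ⊆ ⋃ g, ↑(T g) :=
        Set.subset_iUnion (fun g : G => (T g : Set (EuclideanSpace ℝ (Fin n)))) ⟨g, hg⟩
      exact span_mono hsub (hT2 ⟨g, hg⟩)
  haveI : Fintype t := htfin.fintype
  -- rational lifts
  have hq : ∀ x : t, ∃ q : Fin n → ℚ, eV n q = (x : EuclideanSpace ℝ (Fin n)) := by
    rintro ⟨x, hx⟩
    choose q hqq using hs_rat x (hts hx)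
    exact ⟨q, PiLp.ext fun j => (hqq j).symm⟩
  choose qx hqx using hq
  set U' : Submodule ℚ (Fin n → ℚ) := span ℚ (Set.range qx) with hU'
  set dU := finrank ℚ U' with hdU
  let bU := Module.finBasis ℚ U'
  -- eV maps U' into V
  have heU : ∀ p ∈ U', eV n p ∈ V := by
    intro p hp
    have : U' ≤ (V.restrictScalars ℚ).comap (eV n) := by
      rw [hU']
      refine span_le.2 ?_
      rintro _ ⟨i, rfl⟩
      simp only [Set.mem_preimage, SetLike.mem_coe, Submodule.mem_comap,
        Submodule.restrictScalars_mem]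
      rw [hqx i, ← ht_span]
      exact subset_span i.2
    exact this hp
  have hbU_ind : LinearIndependent ℚ (fun k => (bU k : Fin n → ℚ)) :=
    bU.linearIndependent.map' U'.subtype (Submodule.ker_subtype U')
  have hindU : LinearIndependent ℝ (fun k => eV n (bU k : Fin n → ℚ)) := transfer _ hbU_ind
  -- dU ≤ finrank V
  have hdUV : dU ≤ finrank ℝ V := by
    have h1 : finrank ℝ (span ℝ (Set.range (fun k => eV n (bU k : Fin n → ℚ)))) = dU := by
      rw [finrank_span_eq_card hindU, Fintype.card_fin]
    have h2 : span ℝ (Set.range (fun k => eV n (bU k : Fin n → ℚ))) ≤ V := by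
      refine span_le.2 ?_
      rintro _ ⟨k, rfl⟩
      exact heU _ (bU k).2
    calc dU = _ := h1.symm
    _ ≤ finrank ℝ V := Submodule.finrank_mono h2
  -- the kernel
  set T : (Fin n → ℚ) →ₗ[ℚ] (Fin dU → ℚ) := LinearMap.pi (fun k => dotQ n (bU k : Fin n → ℚ))
    with hT
  set Kq := LinearMap.ker T with hKq
  have hrank : finrank ℚ (LinearMap.range T) + finrank ℚ Kq = n := by
    rw [hKq, LinearMap.finrank_range_add_finrank_ker T, Module.finrank_pi, Fintype.card_fin]
  have hrange : finrank ℚ (LinearMap.range T) ≤ dU := by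
    calc finrank ℚ (LinearMap.range T) ≤ finrank ℚ (Fin dU → ℚ) := Submodule.finrank_le _
    _ = dU := by rw [Module.finrank_pi, Fintype.card_fin]
  -- elements of Kq are orthogonal to V
  have hKq_orth : ∀ p ∈ Kq, eV n p ∈ Vᗮ := by
    intro p hp
    have hdot : ∀ u ∈ U', dotQ n u p = 0 := by
      intro u hu
      have hU'span : U' = span ℚ (Set.range (fun k => (bU k : Fin n → ℚ))) := by
        have hsp := bU.span_eq
        rw [show Set.range (fun k => (bU k : Fin n → ℚ)) = U'.subtype '' Set.range bU by
            rw [← Set.range_comp]; rfl,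
          ← Submodule.map_span, hsp, Submodule.map_top, Submodule.range_subtype]
      have hker : U' ≤ LinearMap.ker (dotQ n p) := by
        rw [hU'span]
        refine span_le.2 ?_
        rintro _ ⟨k, rfl⟩
        have hTk := congrFun (LinearMap.mem_ker.mp hp) k
        simp only [SetLike.mem_coe, LinearMap.mem_ker]
        rw [dotQ_comm]
        simpa [hT, LinearMap.pi_apply] using hTk
      rw [dotQ_comm]
      exact hker hu
    rw [Submodule.mem_orthogonal]
    intro v hv
    have hker2 : V ≤ LinearMap.ker ((innerSL ℝ (eV n p)).toLinearMap) := by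
      rw [← ht_span]
      refine span_le.2 ?_
      intro x hx
      have hx' : x = eV n (qx ⟨x, hx⟩) := (hqx ⟨x, hx⟩).symm
      simp only [SetLike.mem_coe, LinearMap.mem_ker, ContinuousLinearMap.coe_coe, innerSL_apply_apply]
      rw [hx']
      have heq : (inner ℝ (eV n p) (eV n (qx ⟨x, hx⟩)) : ℝ)
          = ((dotQ n (qx ⟨x, hx⟩) p : ℚ) : ℝ) := by
        simp only [PiLp.inner_apply, RCLike.inner_apply, conj_trivial, eV_apply, dotQ,
          LinearMap.coe_mk, AddHom.coe_mk]
        push_cast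
        exact Finset.sum_congr rfl (fun j _ => by ring)
      rw [heq, hdot _ (subset_span ⟨⟨x, hx⟩, rfl⟩)]
      norm_num
    have hmem := hker2 hv
    simp only [LinearMap.mem_ker, ContinuousLinearMap.coe_coe, innerSL_apply_apply] at hmem
    rw [real_inner_comm]
    exact hmem
  -- basis of Kq
  set dK := finrank ℚ Kq with hdK
  let bK := Module.finBasis ℚ Kq
  have hbK_ind : LinearIndependent ℚ (fun k => (bK k : Fin n → ℚ)) :=
    bK.linearIndependent.map' Kq.subtype (Submodule.ker_subtype Kq)
  refine ⟨dK, fun k => (bK k : Fin n → ℚ), fun k => hKq_orth _ (bK k).2, ?_⟩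
  have hind : LinearIndependent ℝ (fun k => eV n (bK k : Fin n → ℚ)) := transfer _ hbK_ind
  beta_reduce
  refine Submodule.eq_of_le_of_finrank_le ?_ ?_
  · refine span_le.2 ?_
    rintro _ ⟨k, rfl⟩
    exact hKq_orth _ (bK k).2
  · have h1 : finrank ℝ (span ℝ (Set.range (fun k => eV n (bK k : Fin n → ℚ)))) = dK := by
      rw [finrank_span_eq_card hind, Fintype.card_fin]
    have h2 : finrank ℝ V + finrank ℝ Vᗮ = n := by
      rw [Submodule.finrank_add_finrank_orthogonal, finrank_euclideanSpace, Fintype.card_fin]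
    have h3 : finrank ℝ Vᗮ ≤ dK := by omega
    exact le_trans h3 h1.ge

lemma inner_eV (n : ℕ) (a b : EuclideanSpace ℝ (Fin n)) :
    (inner ℝ a b : ℝ) = ∑ j, a j * b j := by
  simp [PiLp.inner_apply, RCLike.inner_apply, conj_trivial, mul_comm]

lemma dense_rat (n : ℕ) (V : Submodule ℝ (EuclideanSpace ℝ (Fin n)))
    (hV : ∃ s : Set (EuclideanSpace ℝ (Fin n)),
      (∀ x ∈ s, ∀ j, ∃ q : ℚ, x j = (q : ℝ)) ∧ Submodule.span ℝ s = V)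
    (x : EuclideanSpace ℝ (Fin n)) (hx : x ∈ Vᗮ) (ε : ℝ) (hε : 0 < ε) :
    ∃ q : Fin n → ℚ, eV n q ∈ Vᗮ ∧ ‖eV n q - x‖ < ε := by
  obtain ⟨m, y, hy, hspan⟩ := keyspan n V hV
  have hx' : x ∈ span ℝ (Set.range (fun k => eV n (y k))) := hspan ▸ hx
  obtain ⟨c, hc⟩ := (mem_span_range_iff_exists_fun ℝ).mp hx'
  set M : ℝ := (∑ k, ‖eV n (y k)‖) + 1 with hM
  have hMsum : 0 ≤ ∑ k, ‖eV n (y k)‖ := Finset.sum_nonneg fun k _ => norm_nonneg _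
  have hM0 : 0 < M := by rw [hM]; linarith
  set δ := ε / M with hδ
  have hδ0 : 0 < δ := div_pos hε hM0
  choose r hr1 hr2 using fun k => exists_rat_btwn (show c k < c k + δ by linarith)
  refine ⟨∑ k, r k • y k, ?_, ?_⟩
  · rw [map_sum]
    refine sum_mem (fun k _ => ?_)
    rw [map_smul, ← algebraMap_smul ℝ (r k)]
    exact Vᗮ.smul_mem _ (hy k)
  · have key : eV n (∑ k, r k • y k) - x = ∑ k, ((r k : ℝ) - c k) • eV n (y k) := by
      rw [map_sum, ← hc, ← Finset.sum_sub_distrib]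
      refine Finset.sum_congr rfl (fun k _ => ?_)
      rw [map_smul, ← algebraMap_smul ℝ (r k) (eV n (y k)), sub_smul,
        eq_ratCast (algebraMap ℚ ℝ) (r k)]
    rw [key]
    calc ‖∑ k, ((r k:ℝ) - c k) • eV n (y k)‖
        ≤ ∑ k, ‖((r k:ℝ) - c k) • eV n (y k)‖ := norm_sum_le _ _
      _ = ∑ k, |(r k:ℝ) - c k| * ‖eV n (y k)‖ := by
          simp [norm_smul, Real.norm_eq_abs]
      _ ≤ ∑ k, δ * ‖eV n (y k)‖ := by
          refine Finset.sum_le_sum (fun k _ => ?_)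
          refine mul_le_mul_of_nonneg_right ?_ (norm_nonneg _)
          rw [abs_of_pos (by linarith [hr1 k])]
          linarith [hr2 k]
      _ = δ * ∑ k, ‖eV n (y k)‖ := (Finset.mul_sum _ _ _).symm
      _ < δ * M := by
          refine mul_lt_mul_of_pos_left ?_ hδ0
          rw [hM]; linarith
      _ = ε := by rw [hδ]; field_simp

lemma int_scale {n : ℕ} (q : Fin n → ℚ) :
    ∃ (d : ℕ) (z : Fin n → ℤ), 0 < d ∧ ∀ j, ((z j : ℚ)) = (d : ℚ) * q j := by
  classical
  refine ⟨∏ j, (q j).den,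
    fun j => (q j).num * ∏ j' ∈ Finset.univ.erase j, ((q j').den : ℤ),
    Finset.prod_pos (fun j _ => (q j).pos), fun j => ?_⟩
  have hd : (∏ j', (q j').den : ℕ) = (q j).den * ∏ j' ∈ Finset.univ.erase j, (q j').den :=
    (Finset.mul_prod_erase _ _ (Finset.mem_univ j)).symm
  push_cast [hd]
  rw [show ((q j).den : ℚ) * (∏ j' ∈ Finset.univ.erase j, ((q j').den : ℚ)) * q j
      = ((q j) * (q j).den) * ∏ j' ∈ Finset.univ.erase j, ((q j').den : ℚ) by ring,
    Rat.mul_den_eq_num]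

lemma sum_mul_int {n : ℕ} (v : EuclideanSpace ℝ (Fin n)) (q : Fin n → ℚ) (d : ℕ)
    (z : Fin n → ℤ) (hz : ∀ j, ((z j : ℚ)) = (d : ℚ) * q j) :
    ∑ j, v j * (z j : ℝ) = d * (inner ℝ v (eV n q) : ℝ) := by
  rw [inner_eV, Finset.mul_sum]
  refine Finset.sum_congr rfl (fun j _ => ?_)
  have h : (z j : ℝ) = (d : ℝ) * (q j : ℝ) := by exact_mod_cast congrArg (Rat.cast (K := ℝ)) (hz j)
  rw [h, eV_apply]; ring


/-- Separation of unit vectors in the orthogonal complement of a *rational* subspace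
`V ⊆ ℝ^n` by linear functionals with integer coefficients (`x ↦ ∑ j, x j * z j` with
`z ∈ ℤ^n`) vanishing on `V`. -/
theorem stmt16 (n : ℕ) (V : Submodule ℝ (EuclideanSpace ℝ (Fin n)))
    (hV : ∃ s : Set (EuclideanSpace ℝ (Fin n)),
      (∀ x ∈ s, ∀ j, ∃ q : ℚ, x j = (q : ℝ)) ∧ Submodule.span ℝ s = V) :
    (∀ w ∈ Vᗮ, ‖w‖ = 1 → ∃ z : Fin n → ℤ,
      (∑ j, w j * (z j : ℝ)) < 0 ∧ ∀ v ∈ V, (∑ j, v j * (z j : ℝ)) = 0) ∧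
    (∀ u ∈ Vᗮ, ∀ w ∈ Vᗮ, ‖u‖ = 1 → ‖w‖ = 1 → u ≠ w → ∃ z : Fin n → ℤ,
      0 < (∑ j, u j * (z j : ℝ)) ∧ (∑ j, w j * (z j : ℝ)) < 0 ∧
      ∀ v ∈ V, (∑ j, v j * (z j : ℝ)) = 0) := by
  constructor
  · intro w hw hnw
    obtain ⟨q, hqV, hqc⟩ := dense_rat n V hV (-w) (neg_mem hw) (1/2) (by norm_num)
    have hiw : (inner ℝ w (eV n q) : ℝ) < 0 := by
      have h1 : |(inner ℝ w (eV n q - (-w)) : ℝ)| ≤ ‖w‖ * ‖eV n q - (-w)‖ :=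
        abs_real_inner_le_norm _ _
      rw [hnw, one_mul] at h1
      have h2 : (inner ℝ w (eV n q - (-w)) : ℝ) = (inner ℝ w (eV n q) : ℝ) + 1 := by
        rw [inner_sub_right, inner_neg_right, real_inner_self_eq_norm_mul_norm, hnw]; ring
      rw [h2] at h1
      have h3 := abs_lt.mp (lt_of_le_of_lt h1 hqc)
      linarith [h3.2]
    obtain ⟨d, z, hd, hz⟩ := int_scale q
    have hd0 : (0:ℝ) < d := by exact_mod_cast hd
    refine ⟨z, ?_, ?_⟩
    · rw [sum_mul_int w q d z hz]
      exact mul_neg_of_pos_of_neg hd0 hiw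
    · intro v hv
      rw [sum_mul_int v q d z hz, (Submodule.mem_orthogonal _ _).mp hqV v hv, mul_zero]
  · intro u hu w hw hnu hnw hne
    have huw : (inner ℝ u w : ℝ) < 1 := by
      have hpos : 0 < ‖u - w‖ := by
        rw [norm_pos_iff]; exact sub_ne_zero_of_ne hne
      have hsq : ‖u - w‖ ^ 2 = 2 - 2 * (inner ℝ u w : ℝ) := by
        rw [norm_sub_sq_real, hnu, hnw]; ring
      nlinarith
    set a : ℝ := 1 - inner ℝ u w with ha
    have ha0 : 0 < a := by rw [ha]; linarith
    obtain ⟨q, hqV, hqc⟩ := dense_rat n V hV (u - w) (sub_mem hu hw) (a/2) (by linarith)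
    have hiu : 0 < (inner ℝ u (eV n q) : ℝ) := by
      have h1 : |(inner ℝ u (eV n q - (u - w)) : ℝ)| ≤ ‖u‖ * ‖eV n q - (u - w)‖ :=
        abs_real_inner_le_norm _ _
      rw [hnu, one_mul] at h1
      have h2 : (inner ℝ u (eV n q - (u - w)) : ℝ) = (inner ℝ u (eV n q) : ℝ) - a := by
        rw [inner_sub_right, inner_sub_right, real_inner_self_eq_norm_mul_norm, hnu, ha]; ring
      rw [h2] at h1
      have h3 := abs_lt.mp (lt_of_le_of_lt h1 hqc)
      linarith [h3.1]
    have hiw : (inner ℝ w (eV n q) : ℝ) < 0 := by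
      have h1 : |(inner ℝ w (eV n q - (u - w)) : ℝ)| ≤ ‖w‖ * ‖eV n q - (u - w)‖ :=
        abs_real_inner_le_norm _ _
      rw [hnw, one_mul] at h1
      have h2 : (inner ℝ w (eV n q - (u - w)) : ℝ) = (inner ℝ w (eV n q) : ℝ) + a := by
        rw [inner_sub_right, inner_sub_right, real_inner_self_eq_norm_mul_norm, hnw, ha,
          real_inner_comm w u]; ring
      rw [h2] at h1
      have h3 := abs_lt.mp (lt_of_le_of_lt h1 hqc)
      linarith [h3.2]
    obtain ⟨d, z, hd, hz⟩ := int_scale q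
    have hd0 : (0:ℝ) < d := by exact_mod_cast hd
    refine ⟨z, ?_, ?_, ?_⟩
    · rw [sum_mul_int u q d z hz]
      positivity
    · rw [sum_mul_int w q d z hz]
      exact mul_neg_of_pos_of_neg hd0 hiw
    · intro v hv
      rw [sum_mul_int v q d z hz, (Submodule.mem_orthogonal _ _).mp hqV v hv, mul_zero]
end

section
/- Let (v₁,…,v_k) be a tuple of orthonormal vectors of ℝ^n and define recursively w₁ = v₁ and, for 1 < i ≤ k, w_i equal to the orthogonal projection of v_i onto the orthogonal complement of the rational envelope ⟨⟨w₁,…,w_{i−1}⟩⟩ (the smallest subspace of ℝ^n containing w₁,…,w_{i−1} that has a basis of rational vectors). Then for each i ≤ k: v_i − w_i lies in ⟨⟨w₁,…,w_{i−1}⟩⟩, and the rational envelopes satisfy ⟨⟨v₁,…,v_i⟩⟩ = ⟨⟨w₁,…,w_i⟩⟩. -/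
/-- A subspace of `ℝ^n` is rational if it is spanned by vectors with rational
coordinates. -/
def IsRatSubspace (n : ℕ) (V : Submodule ℝ (EuclideanSpace ℝ (Fin n))) : Prop :=
  ∃ s : Set (EuclideanSpace ℝ (Fin n)),
    (∀ x ∈ s, ∀ j, ∃ q : ℚ, x j = (q : ℝ)) ∧ Submodule.span ℝ s = V

/-- The rational envelope of a set `S ⊆ ℝ^n`: the smallest rational subspace
containing `S` (the intersection of all rational subspaces containing `S`). -/
def ratEnv (n : ℕ) (S : Set (EuclideanSpace ℝ (Fin n))) :
    Submodule ℝ (EuclideanSpace ℝ (Fin n)) :=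
  sInf {V | IsRatSubspace n V ∧ S ⊆ V}

lemma subset_ratEnv (n : ℕ) (S : Set (EuclideanSpace ℝ (Fin n))) :
    S ⊆ (ratEnv n S : Set (EuclideanSpace ℝ (Fin n))) := by
  intro x hx
  exact Submodule.mem_sInf.mpr fun V hV => hV.2 hx

lemma ratEnv_le (n : ℕ) {S T : Set (EuclideanSpace ℝ (Fin n))}
    (h : S ⊆ (ratEnv n T : Set (EuclideanSpace ℝ (Fin n)))) :
    ratEnv n S ≤ ratEnv n T :=
  le_sInf fun V hV => sInf_le ⟨hV.1, fun x hx => sInf_le (α := Submodule ℝ _) hV (h hx)⟩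

lemma ratEnv_mono (n : ℕ) {S T : Set (EuclideanSpace ℝ (Fin n))}
    (h : S ⊆ T) : ratEnv n S ≤ ratEnv n T :=
  ratEnv_le n (h.trans (subset_ratEnv n T))


/-- Gram–Schmidt-like reduction of an index relative to rational envelopes: with
`w₁ = v₁` and `w_i` the orthogonal projection of `v_i` onto `⟨⟨w₁,…,w_{i-1}⟩⟩ᗮ`, one has
`v_i - w_i ∈ ⟨⟨w₁,…,w_{i-1}⟩⟩` and `⟨⟨v₁,…,v_i⟩⟩ = ⟨⟨w₁,…,w_i⟩⟩` for each `i`. -/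
theorem stmt17 (n k : ℕ) (v w : Fin k → EuclideanSpace ℝ (Fin n))
    (horth : ∀ i j : Fin k, (inner ℝ (v i) (v j) : ℝ) = if i = j then 1 else 0)
    (hw0 : ∀ h : 0 < k, w ⟨0, h⟩ = v ⟨0, h⟩)
    (hwi : ∀ i : Fin k, 0 < i.val →
      w i = (Submodule.orthogonalProjectionOnto ((ratEnv n (w '' {j | j < i}))ᗮ) (v i) :
        EuclideanSpace ℝ (Fin n))) :
    ∀ i : Fin k,
      v i - w i ∈ ratEnv n (w '' {j | j < i}) ∧
      ratEnv n (v '' {j | j ≤ i}) = ratEnv n (w '' {j | j ≤ i}) := by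
  -- Part (a), for every index
  have ha : ∀ i : Fin k, v i - w i ∈ ratEnv n (w '' {j | j < i}) := by
    intro i
    rcases Nat.eq_zero_or_pos i.val with h0 | hpos
    · have : i = ⟨0, i.pos⟩ := Fin.ext h0
      rw [this, hw0 i.pos, sub_self]
      exact zero_mem _
    · rw [hwi i hpos]
      have := Submodule.sub_starProjection_mem_orthogonal
        (K := (ratEnv n (w '' {j | j < i}))ᗮ) (v i)
      rwa [Submodule.orthogonal_orthogonal] at this
  have key : ∀ i : Fin k, ratEnv n (v '' {j | j ≤ i}) = ratEnv n (w '' {j | j ≤ i}) := by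
    suffices h : ∀ m, ∀ i : Fin k, i.val = m →
        ratEnv n (v '' {j | j ≤ i}) = ratEnv n (w '' {j | j ≤ i}) from
      fun i => h i.val i rfl
    intro m
    induction m using Nat.strong_induction_on with
    | _ m IHm =>
      intro i him
      have IH : ∀ j : Fin k, j < i →
          ratEnv n (v '' {l | l ≤ j}) = ratEnv n (w '' {l | l ≤ j}) :=
        fun j hj => IHm j.val (him ▸ hj) j rfl
      apply le_antisymm
      · apply ratEnv_le
        rintro x ⟨j, hj, rfl⟩
        have h1 : w j ∈ ratEnv n (w '' {l | l ≤ i}) :=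
          subset_ratEnv n _ ⟨j, hj, rfl⟩
        have h2 : v j - w j ∈ ratEnv n (w '' {l | l ≤ i}) :=
          ratEnv_mono n (Set.image_mono (f := w) fun l (hl : l < j) => le_of_lt (lt_of_lt_of_le hl hj))
            (ha j)
        have : v j = w j + (v j - w j) := by abel
        rw [this]; exact add_mem h1 h2
      · apply ratEnv_le
        rintro x ⟨j, hj, rfl⟩
        rcases Nat.eq_zero_or_pos j.val with h0 | hpos
        · have hje : j = ⟨0, j.pos⟩ := Fin.ext h0
          have : w j = v j := by rw [hje, hw0 j.pos]
          rw [this]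
          exact subset_ratEnv n _ ⟨j, hj, rfl⟩
        · -- j > 0 : {l | l < j} = {l | l ≤ j'} for j' = pred
          set j' : Fin k := ⟨j.val - 1, lt_of_le_of_lt (Nat.sub_le _ _) j.isLt⟩ with hj'
          have hset : {l : Fin k | l < j} = {l | l ≤ j'} := by
            ext l
            simp only [Set.mem_setOf_eq, Fin.lt_def, Fin.le_def, hj']
            omega
          have hj'i : j' < i := lt_of_lt_of_le (by simp [Fin.lt_def, hj']; omega) hj
          have hmem : v j - w j ∈ ratEnv n (v '' {l | l ≤ i}) := by
            have := ha j
            rw [hset, ← IH j' hj'i] at this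
            exact ratEnv_mono n
              (Set.image_mono (f := v) fun l (hl : l ≤ j') => le_of_lt (lt_of_le_of_lt hl hj'i)) this
          have h1 : v j ∈ ratEnv n (v '' {l | l ≤ i}) :=
            subset_ratEnv n _ ⟨j, hj, rfl⟩
          have : w j = v j - (v j - w j) := by abel
          rw [this]; exact sub_mem h1 hmem
  exact fun i => ⟨ha i, key i⟩
end

section
/- Let U be an ordered field extension of ℝ containing infinitesimals, let (v₁,…,v_k) be orthonormal vectors of ℝ^n, let t ≤ k, and let α₁,…,α_t ∈ U be strictly positive with α_j/α_i infinitesimal whenever i < j. Then for any positive reals r₁,…,r_k there exist β₁,…,β_k ≥ 0 in U such that α₁v₁ + ⋯ + α_tv_t = β₁(r₁v₁) + β₂(r₁v₁ + r₂v₂) + ⋯ + β_k(r₁v₁ + ⋯ + r_kv_k) in U^n. -/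
/-- Telescoping sum over an interval. -/
lemma tele_aux {K : Type*} [AddCommGroup K] (g : ℕ → K) (m n : ℕ) (h : m ≤ n) :
    ∑ j ∈ Finset.Ico m n, (g j - g (j + 1)) = g m - g n := by
  induction n, h using Nat.le_induction with
  | base => simp
  | succ n hn ih => rw [Finset.sum_Ico_succ_top hn, ih]; abel

lemma filter_range_eq_Ico (i k : ℕ) :
    (Finset.range k).filter (fun j => i ≤ j) = Finset.Ico i k := by
  ext m; simp [Finset.mem_filter, Finset.mem_Ico, and_comm]

lemma finsum_ge {M : Type*} [AddCommMonoid M] (k : ℕ) (i : Fin k) (g : ℕ → M) :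
    ∑ j ∈ Finset.univ.filter (fun j : Fin k => i ≤ j), g j.val
      = ∑ j ∈ Finset.Ico i.val k, g j := by
  refine Finset.sum_bij (fun j _ => j.val) ?_ ?_ ?_ ?_
  · intro j hj
    simp only [Finset.mem_filter, Finset.mem_univ, true_and] at hj
    exact Finset.mem_Ico.2 ⟨hj, j.isLt⟩
  · intro j1 _ j2 _ h
    exact Fin.val_injective h
  · intro m hm
    obtain ⟨h1, h2⟩ := Finset.mem_Ico.1 hm
    exact ⟨⟨m, h2⟩, Finset.mem_filter.2 ⟨Finset.mem_univ _, h1⟩, rfl⟩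
  · intros; rfl

/-- Let `K` be an ordered field extension of `ℝ` containing a nonzero infinitesimal,
`v₁,…,v_k` orthonormal in `ℝ^n`, `t ≤ k`, and `α₁,…,α_t > 0` in `K` with `α_j/α_i`
infinitesimal for `i < j`.  Then for any positive reals `r₁,…,r_k` there are
`β₁,…,β_k ≥ 0` in `K` with
`α₁v₁ + ⋯ + α_tv_t = β₁(r₁v₁) + β₂(r₁v₁+r₂v₂) + ⋯ + β_k(r₁v₁+⋯+r_kv_k)` in `K^n`. -/
theorem stmt18 {K : Type*} [Field K] [LinearOrder K] [IsStrictOrderedRing K] (f : ℝ →+* K) (hf : StrictMono f)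
    (hinf : ∃ x : K, x ≠ 0 ∧ Infml f x)
    (n k t : ℕ) (ht : t ≤ k)
    (v : Fin k → Fin n → ℝ)
    (horth : ∀ i j : Fin k, (∑ c : Fin n, v i c * v j c) = if i = j then 1 else 0)
    (a : Fin t → K) (hapos : ∀ i, 0 < a i)
    (hratio : ∀ i j : Fin t, i < j → Infml f (a j / a i))
    (r : Fin k → ℝ) (hr : ∀ i, 0 < r i) :
    ∃ b : Fin k → K, (∀ j, 0 ≤ b j) ∧
      ∀ c : Fin n,
        (∑ i : Fin t, a i * f (v (Fin.castLE ht i) c)) =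
          ∑ j : Fin k, b j *
            f (∑ i ∈ Finset.univ.filter (fun i : Fin k => i ≤ j), r i * v i c) := by
  classical
  have hfr : ∀ i : Fin k, 0 < f (r i) := fun i => by
    have := hf (hr i); simpa using this
  set s : ℕ → K := fun i =>
    if h : i < t then a ⟨i, h⟩ / f (r ⟨i, h.trans_le ht⟩) else 0 with hs
  have hsnn : ∀ i, 0 ≤ s i := by
    intro i
    simp only [hs]
    split
    · exact le_of_lt (div_pos (hapos _) (hfr _))
    · exact le_refl 0
  have hmono : ∀ i, s (i + 1) ≤ s i := by
    intro i
    by_cases h1 : i + 1 < t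
    · have h0 : i < t := Nat.lt_of_succ_lt h1
      simp only [hs, dif_pos h1, dif_pos h0]
      set i0 : Fin t := ⟨i, h0⟩
      set i1 : Fin t := ⟨i + 1, h1⟩
      set j0 : Fin k := ⟨i, h0.trans_le ht⟩
      set j1 : Fin k := ⟨i + 1, h1.trans_le ht⟩
      have hrat := hratio i0 i1 (by simp [i0, i1, Fin.lt_def])
      have hρ : (0 : ℝ) < r j1 / r j0 := div_pos (hr j1) (hr j0)
      have hlt := hrat _ hρ
      rw [abs_of_pos (div_pos (hapos i1) (hapos i0)), map_div₀] at hlt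
      have h2 : a i1 / a i0 ≤ f (r j1) / f (r j0) := le_of_lt hlt
      rw [div_le_div_iff₀ (hapos i0) (hfr j0)] at h2
      rw [div_le_div_iff₀ (hfr j1) (hfr j0)]
      linarith
    · simp only [hs, dif_neg h1]
      exact hsnn i
  have hsk : s k = 0 := by simp only [hs]; rw [dif_neg (by omega)]
  refine ⟨fun j => s j.val - s (j.val + 1), fun j => sub_nonneg.2 (hmono j.val), ?_⟩
  intro c
  have step1 : ∀ j : Fin k,
      (s j.val - s (j.val + 1)) *
          f (∑ i ∈ Finset.univ.filter (fun i : Fin k => i ≤ j), r i * v i c)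
        = ∑ i : Fin k, (if i ≤ j then (s j.val - s (j.val + 1)) *
            (f (r i) * f (v i c)) else 0) := by
    intro j
    rw [map_sum, Finset.mul_sum, Finset.sum_filter]
    refine Finset.sum_congr rfl fun i _ => ?_
    split
    · rw [map_mul]
    · rfl
  rw [Finset.sum_congr rfl fun j _ => step1 j, Finset.sum_comm]
  have step2 : ∀ i : Fin k,
      (∑ j : Fin k, if i ≤ j then (s j.val - s (j.val + 1)) *
          (f (r i) * f (v i c)) else 0)
        = s i.val * (f (r i) * f (v i c)) := by
    intro i
    rw [← Finset.sum_filter]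
    refine Eq.trans (finsum_ge k i fun m => (s m - s (m + 1)) * (f (r i) * f (v i c))) ?_
    rw [← Finset.sum_mul, tele_aux s i.val k (le_of_lt i.isLt), hsk, sub_zero]
  rw [Finset.sum_congr rfl fun i _ => step2 i]
  -- Now both sides as sums over ℕ ranges of a common function
  set G : ℕ → K := fun m =>
    if h : m < t then a ⟨m, h⟩ * f (v ⟨m, h.trans_le ht⟩ c) else 0 with hG
  have hL : (∑ i : Fin t, a i * f (v (Fin.castLE ht i) c)) = ∑ m ∈ Finset.range t, G m := by
    rw [← Fin.sum_univ_eq_sum_range]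
    refine Finset.sum_congr rfl fun i _ => ?_
    simp only [hG, dif_pos i.isLt]
    rfl
  have hR : (∑ i : Fin k, s i.val * (f (r i) * f (v i c))) = ∑ m ∈ Finset.range k, G m := by
    rw [← Fin.sum_univ_eq_sum_range]
    refine Finset.sum_congr rfl fun i _ => ?_
    simp only [hG, hs]
    by_cases h : i.val < t
    · rw [dif_pos h, dif_pos h]
      simp only [Fin.eta]
      field_simp
      rw [mul_assoc, mul_comm (f (r i)), ← mul_assoc, mul_div_assoc, div_self (ne_of_gt (hfr i)),
        mul_one]
    · rw [dif_neg h, dif_neg h, zero_mul]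
  rw [hL, hR]
  refine Finset.sum_subset (Finset.range_subset_range.2 ht) fun m _ hm => ?_
  simp only [Finset.mem_range, not_lt] at hm
  simp only [hG]
  rw [dif_neg (by omega)]
end

section
/- Let U be an ordered field extension of ℝ, let v₁,…,v_n be a basis of ℝ^n (hence of U^n over U), let k ≤ n, and let x = α₁v₁ + ⋯ + α_nv_n ∈ U^n. Suppose that for every choice of positive reals r₁,…,r_k there exist β₁,…,β_k ≥ 0 in U with x = β₁(r₁v₁) + β₂(r₁v₁ + r₂v₂) + ⋯ + β_k(r₁v₁ + ⋯ + r_kv_k). Then α_i ≥ 0 for all i, α_i = 0 for i > k, α_j ≤ α_i whenever i ≤ j ≤ k, and if t is the largest index with α_t ≠ 0 then α_{i+1}/α_i is a positive infinitesimal for every i < t. -/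
lemma unique_zero19 {K : Type*} [Field K] [LinearOrder K] [IsStrictOrderedRing K] (f : ℝ →+* K) (hf : StrictMono f)
    {n : ℕ} {v : Fin n → Fin n → ℝ} (hli : LinearIndependent ℝ v)
    (g : Fin n → K) (hg : ∀ c, ∑ i : Fin n, g i * f (v i c) = 0) : ∀ i, g i = 0 := by
  set M : Matrix (Fin n) (Fin n) ℝ := Matrix.of v with hMdef
  have hM : IsUnit M := Matrix.linearIndependent_rows_iff_isUnit.mp hli
  have hdet : M.det ≠ 0 := by
    intro h
    have := (Matrix.isUnit_iff_isUnit_det M).mp hM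
    rw [h] at this
    exact not_isUnit_zero this
  have hdet2 : (M.map f).det ≠ 0 := by
    have hmd : (M.map f).det = f M.det := by
      rw [← RingHom.mapMatrix_apply, RingHom.map_det]
    rw [hmd]
    intro h
    exact hdet (hf.injective (by simpa using h))
  have hU : IsUnit (M.map f) := (Matrix.isUnit_iff_isUnit_det _).mpr (isUnit_iff_ne_zero.mpr hdet2)
  have hvm : Matrix.vecMul g (M.map f) = 0 := by
    funext c
    simpa [Matrix.vecMul, dotProduct, Matrix.map, hMdef] using hg c
  have hinj := Matrix.vecMul_injective_iff_isUnit.mpr hU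
  have : g = 0 := hinj (by simp only [hvm, Matrix.zero_vecMul])
  intro i; rw [this]; rfl


/-- Let `v₁,…,v_n` be a basis of `ℝ^n`, `k ≤ n`, and `x = α₁v₁ + ⋯ + α_nv_n ∈ K^n`.
If for every choice of positive reals `r₁,…,r_k` there exist `β₁,…,β_k ≥ 0` in `K` with
`x = β₁(r₁v₁) + ⋯ + β_k(r₁v₁+⋯+r_kv_k)`, then all `α_i ≥ 0`, `α_i = 0` for `i > k`,
`α_j ≤ α_i` for `i ≤ j ≤ k`, and if `t` is the largest index with `α_t ≠ 0` then
`α_{i+1}/α_i` is a positive infinitesimal for every `i < t`. -/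
theorem stmt19 {K : Type*} [Field K] [LinearOrder K] [IsStrictOrderedRing K] (f : ℝ →+* K) (hf : StrictMono f)
    (n k : ℕ) (hk : k ≤ n)
    (v : Fin n → Fin n → ℝ)
    (hli : LinearIndependent ℝ v)
    (hspan : Submodule.span ℝ (Set.range v) = ⊤)
    (a : Fin n → K)
    (hx : ∀ r : Fin k → ℝ, (∀ i, 0 < r i) → ∃ b : Fin k → K, (∀ j, 0 ≤ b j) ∧
      ∀ c : Fin n,
        (∑ i : Fin n, a i * f (v i c)) =
          ∑ j : Fin k, b j *
            f (∑ i ∈ Finset.univ.filter (fun i : Fin k => i ≤ j),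
                r i * v (Fin.castLE hk i) c)) :
    (∀ i, 0 ≤ a i) ∧
    (∀ i : Fin n, k ≤ i.val → a i = 0) ∧
    (∀ i j : Fin n, i ≤ j → j.val < k → a j ≤ a i) ∧
    (∀ t : Fin n, a t ≠ 0 → (∀ s : Fin n, t < s → a s = 0) →
      ∀ (i : ℕ) (h : i + 1 < n), (⟨i + 1, h⟩ : Fin n) ≤ t →
        0 < a ⟨i + 1, h⟩ / a ⟨i, Nat.lt_of_succ_lt h⟩ ∧
        Infml f (a ⟨i + 1, h⟩ / a ⟨i, Nat.lt_of_succ_lt h⟩)) := by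
  -- Key: for any positive reals r, the coefficients a are determined
  have key : ∀ r : Fin k → ℝ, (∀ i, 0 < r i) → ∃ b : Fin k → K, (∀ j, 0 ≤ b j) ∧
      ∀ m : Fin n, a m = if h : m.val < k then
        f (r ⟨m.val, h⟩) *
          ∑ j ∈ Finset.univ.filter (fun j : Fin k => (⟨m.val, h⟩ : Fin k) ≤ j), b j
      else 0 := by
    intro r hr
    obtain ⟨b, hb, heq⟩ := hx r hr
    refine ⟨b, hb, ?_⟩
    set d : Fin n → K := fun m => if h : m.val < k then
        f (r ⟨m.val, h⟩) *
          ∑ j ∈ Finset.univ.filter (fun j : Fin k => (⟨m.val, h⟩ : Fin k) ≤ j), b j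
      else 0 with hd
    have hsum : ∀ c, ∑ m : Fin n, d m * f (v m c) =
        ∑ j : Fin k, b j * f (∑ i ∈ Finset.univ.filter (fun i : Fin k => i ≤ j),
          r i * v (Fin.castLE hk i) c) := by
      intro c
      have h1 : ∑ m : Fin n, d m * f (v m c)
          = ∑ m ∈ Finset.univ.map (Fin.castLEEmb hk), d m * f (v m c) := by
        symm
        apply Finset.sum_subset (Finset.subset_univ _)
        intro m _ hm
        have hnk : ¬ m.val < k := by
          intro hlt
          exact hm (Finset.mem_map.mpr ⟨⟨m.val, hlt⟩, Finset.mem_univ _, Fin.ext rfl⟩)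
        simp [hd, hnk]
      rw [h1, Finset.sum_map]
      have h2 : ∀ i : Fin k, d (Fin.castLEEmb hk i) * f (v (Fin.castLEEmb hk i) c)
          = ∑ j ∈ Finset.univ.filter (fun j : Fin k => i ≤ j),
              b j * (f (r i) * f (v (Fin.castLE hk i) c)) := by
        intro i
        have hik : (Fin.castLEEmb hk i).val < k := i.isLt
        have hi2 : (⟨(Fin.castLEEmb hk i).val, hik⟩ : Fin k) = i := Fin.ext rfl
        rw [hd]
        simp only [dif_pos hik, hi2]
        rw [Finset.mul_sum, Finset.sum_mul]
        apply Finset.sum_congr rfl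
        intro j _
        have : (Fin.castLEEmb hk i) = Fin.castLE hk i := rfl
        rw [this]; ring
      simp_rw [h2]
      have h3 : ∑ i : Fin k, ∑ j ∈ Finset.univ.filter (fun j : Fin k => i ≤ j),
            b j * (f (r i) * f (v (Fin.castLE hk i) c))
          = ∑ j : Fin k, ∑ i ∈ Finset.univ.filter (fun i : Fin k => i ≤ j),
            b j * (f (r i) * f (v (Fin.castLE hk i) c)) := by
        simp_rw [Finset.sum_filter]
        exact Finset.sum_comm
      rw [h3]
      apply Finset.sum_congr rfl
      intro j _
      rw [map_sum, Finset.mul_sum]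
      apply Finset.sum_congr rfl
      intro i _
      rw [map_mul]
    have hz : ∀ c, ∑ m : Fin n, (a m - d m) * f (v m c) = 0 := by
      intro c
      simp_rw [sub_mul]
      rw [Finset.sum_sub_distrib, hsum c, heq c, sub_self]
    have hzero := unique_zero19 f hf hli (fun m => a m - d m) hz
    intro m
    have := hzero m
    beta_reduce at this
    have : a m = d m := by linarith [sub_eq_zero.mp this]
    rw [this, hd]
  -- instantiate with r = 1
  obtain ⟨b1, hb1, hab1⟩ := key (fun _ => 1) (fun _ => one_pos)
  have part1 : ∀ i, 0 ≤ a i := by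
    intro i
    rw [hab1 i]
    split
    · exact mul_nonneg (le_of_lt (by simpa using hf (show (0:ℝ) < 1 by norm_num)))
        (Finset.sum_nonneg fun j _ => hb1 j)
    · exact le_refl _
  have part2 : ∀ i : Fin n, k ≤ i.val → a i = 0 := by
    intro i hi
    rw [hab1 i, dif_neg (not_lt.mpr hi)]
  have part3 : ∀ i j : Fin n, i ≤ j → j.val < k → a j ≤ a i := by
    intro i j hij hjk
    have hik : i.val < k := lt_of_le_of_lt hij hjk
    rw [hab1 i, hab1 j, dif_pos hik, dif_pos hjk, map_one, one_mul, one_mul]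
    apply Finset.sum_le_sum_of_subset_of_nonneg
    · intro l hl
      simp only [Finset.mem_filter, Finset.mem_univ, true_and] at hl ⊢
      exact le_trans (by exact hij) hl
    · intro l _ _
      exact hb1 l
  refine ⟨part1, part2, part3, ?_⟩
  intro t hat hlast i h hit
  have htk : t.val < k := by
    by_contra hc
    exact hat (part2 t (not_lt.mp hc))
  have hatpos : 0 < a t := lt_of_le_of_ne (part1 t) (Ne.symm hat)
  have hi1k : i + 1 < k := lt_of_le_of_lt hit htk
  have hik : i < k := Nat.lt_of_succ_lt hi1k
  have ha1pos : 0 < a ⟨i + 1, h⟩ := lt_of_lt_of_le hatpos (part3 ⟨i + 1, h⟩ t hit htk)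
  have ha0pos : 0 < a ⟨i, Nat.lt_of_succ_lt h⟩ :=
    lt_of_lt_of_le ha1pos (part3 ⟨i, Nat.lt_of_succ_lt h⟩ ⟨i + 1, h⟩ (by simp) hi1k)
  have hqpos : 0 < a ⟨i + 1, h⟩ / a ⟨i, Nat.lt_of_succ_lt h⟩ := div_pos ha1pos ha0pos
  refine ⟨hqpos, ?_⟩
  intro ρ hρ
  rw [abs_of_pos hqpos]
  -- choose r with r_{i+1} = ρ/2, else 1
  set r : Fin k → ℝ := fun l => if l.val = i + 1 then ρ / 2 else 1 with hrdef
  have hrpos : ∀ l, 0 < r l := by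
    intro l
    simp only [hrdef]
    split
    · linarith
    · norm_num
  obtain ⟨b, hb, hab⟩ := key r hrpos
  have hiv : (⟨i, Nat.lt_of_succ_lt h⟩ : Fin n).val < k := hik
  have hi1v : (⟨i + 1, h⟩ : Fin n).val < k := hi1k
  have ha0 : a ⟨i, Nat.lt_of_succ_lt h⟩ =
      ∑ j ∈ Finset.univ.filter (fun j : Fin k => (⟨i, hik⟩ : Fin k) ≤ j), b j := by
    rw [hab _, dif_pos hiv]
    have : r ⟨i, hik⟩ = 1 := by
      rw [hrdef]; simp
    rw [this, map_one, one_mul]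
  have ha1 : a ⟨i + 1, h⟩ = f (ρ / 2) *
      ∑ j ∈ Finset.univ.filter (fun j : Fin k => (⟨i + 1, hi1k⟩ : Fin k) ≤ j), b j := by
    rw [hab _, dif_pos hi1v]
    have : r ⟨i + 1, hi1k⟩ = ρ / 2 := by
      rw [hrdef]; simp
    rw [this]
  have hSle : ∑ j ∈ Finset.univ.filter (fun j : Fin k => (⟨i + 1, hi1k⟩ : Fin k) ≤ j), b j ≤
      ∑ j ∈ Finset.univ.filter (fun j : Fin k => (⟨i, hik⟩ : Fin k) ≤ j), b j := by
    apply Finset.sum_le_sum_of_subset_of_nonneg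
    · intro l hl
      simp only [Finset.mem_filter, Finset.mem_univ, true_and] at hl ⊢
      exact le_trans (by simp [Fin.le_def]) hl
    · intro l _ _
      exact hb l
  have hfpos : 0 < f (ρ / 2) := by
    have := hf (show (0:ℝ) < ρ / 2 by linarith)
    simpa using this
  have hle : a ⟨i + 1, h⟩ ≤ f (ρ / 2) * a ⟨i, Nat.lt_of_succ_lt h⟩ := by
    rw [ha1, ha0]
    exact mul_le_mul_of_nonneg_left hSle (le_of_lt hfpos)
  have : a ⟨i + 1, h⟩ / a ⟨i, Nat.lt_of_succ_lt h⟩ ≤ f (ρ / 2) := by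
    rw [div_le_iff₀ ha0pos]
    linarith
  have hlt : f (ρ / 2) < f ρ := hf (by linarith)
  linarith
end
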